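/- (POD reconstruction preserves linear constraints) Let c ∈ ℝ^N, X ∈ ℝ^{N×M} with c^T X = β 1_M^T for some constant β ∈ ℝ, X̃ = X H the column-centered data, and U_d ∈ ℝ^{N×d} with columns in the column space of X̃. Then the reconstruction X̂ = U_d U_d^T X̃ + X(I_M - H) satisfies c^T X̂ = β 1_M^T. -/
import Mathlib


open Matrix

/-- POD reconstruction preserves linear constraints: if
`cᵀ X = β 1ᵀ`, then the POD reconstruction
`X̂ = U_d U_dᵀ X̃ + X (I - H)` also satisfies `cᵀ X̂ = β 1ᵀ`. -/
theorem pod_reconstruction_preserves_linear_constraint (N M d : ℕ) (hM : 0 < M)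
    (c : Fin N → ℝ) (β : ℝ)
    (X : Matrix (Fin N) (Fin M) ℝ)
    (hX : ∀ j : Fin M, ∑ i, c i * X i j = β)
    (H : Matrix (Fin M) (Fin M) ℝ)
    (hH : H = 1 - (M : ℝ)⁻¹ • (Matrix.of fun _ _ : Fin M => (1 : ℝ)))
    (Xc : Matrix (Fin N) (Fin M) ℝ) (hXc : Xc = X * H)
    (Ud : Matrix (Fin N) (Fin d) ℝ)
    (hUd : ∀ j : Fin d, (fun i => Ud i j) ∈
      Submodule.span ℝ (Set.range fun k : Fin M => fun i => Xc i k))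
    (Xhat : Matrix (Fin N) (Fin M) ℝ)
    (hXhat : Xhat = Ud * Udᵀ * Xc + X * (1 - H)) :
    ∀ j : Fin M, ∑ i, c i * Xhat i j = β := by
  have hMne : (M : ℝ) ≠ 0 := Nat.cast_ne_zero.mpr hM.ne'
  -- column sums of H are 0
  have hHcol : ∀ j, ∑ l, H l j = 0 := by
    intro j
    rw [hH]
    simp only [Matrix.sub_apply, Matrix.smul_apply, Matrix.one_apply, Matrix.of_apply,
      smul_eq_mul, mul_one, Finset.sum_sub_distrib, Finset.sum_const, Finset.card_univ,
      Fintype.card_fin, nsmul_eq_mul]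
    rw [Finset.sum_ite_eq' Finset.univ j (fun _ => (1:ℝ))]
    simp [hMne]
  -- cᵀ Xc = 0
  have hcXc : ∀ k, ∑ i, c i * Xc i k = 0 := by
    intro k
    rw [hXc]
    simp only [Matrix.mul_apply, Finset.mul_sum]
    rw [Finset.sum_comm]
    calc (∑ l, ∑ i, c i * (X i l * H l k))
        = ∑ l, (∑ i, c i * X i l) * H l k := by
          refine Finset.sum_congr rfl fun l _ => ?_
          rw [Finset.sum_mul]; exact Finset.sum_congr rfl fun i _ => by ring
      _ = ∑ l, β * H l k := by
          refine Finset.sum_congr rfl fun l _ => by rw [hX l]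
      _ = β * ∑ l, H l k := by rw [Finset.mul_sum]
      _ = 0 := by rw [hHcol k]; ring
  -- any vector in the span of columns of Xc is annihilated by c
  have hspan : ∀ v : Fin N → ℝ,
      v ∈ Submodule.span ℝ (Set.range fun k : Fin M => fun i => Xc i k) →
      ∑ i, c i * v i = 0 := by
    intro v hv
    let f : (Fin N → ℝ) →ₗ[ℝ] ℝ :=
      { toFun := fun w => ∑ i, c i * w i
        map_add' := fun w₁ w₂ => by
          simp [mul_add, Finset.sum_add_distrib]
        map_smul' := fun r w => by
          simp only [Pi.smul_apply, smul_eq_mul, RingHom.id_apply, Finset.mul_sum]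
          exact Finset.sum_congr rfl fun i _ => by ring }
    have hker : Submodule.span ℝ (Set.range fun k : Fin M => fun i => Xc i k)
        ≤ LinearMap.ker f := by
      rw [Submodule.span_le]
      rintro _ ⟨k, rfl⟩
      exact hcXc k
    exact hker hv
  have hcUd : ∀ k : Fin d, ∑ i, c i * Ud i k = 0 := fun k => hspan _ (hUd k)
  intro j
  have h1 : ∑ i, c i * (Ud * Udᵀ * Xc) i j = 0 := by
    have hentry : ∀ i, (Ud * Udᵀ * Xc) i j = ∑ k, Ud i k * (Udᵀ * Xc) k j := by
      intro i; rw [Matrix.mul_assoc, Matrix.mul_apply]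
    calc (∑ i, c i * (Ud * Udᵀ * Xc) i j)
        = ∑ i, ∑ k, (Udᵀ * Xc) k j * (c i * Ud i k) := by
          refine Finset.sum_congr rfl fun i _ => ?_
          rw [hentry i, Finset.mul_sum]
          exact Finset.sum_congr rfl fun k _ => by ring
      _ = ∑ k, (Udᵀ * Xc) k j * ∑ i, c i * Ud i k := by
          rw [Finset.sum_comm]
          exact Finset.sum_congr rfl fun k _ => by rw [Finset.mul_sum]
      _ = 0 := by simp [hcUd]
  set Y : Matrix (Fin N) (Fin M) ℝ := X * (1 - H) with hY
  have h2 : ∑ i, c i * Y i j = β := by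
    calc (∑ i, c i * Y i j)
        = ∑ l, (∑ i, c i * X i l) * (1 - H) l j := by
          rw [hY]
          simp only [Matrix.mul_apply, Finset.mul_sum]
          rw [Finset.sum_comm]
          refine Finset.sum_congr rfl fun l _ => ?_
          rw [Finset.sum_mul]; exact Finset.sum_congr rfl fun i _ => by ring
      _ = β * ∑ l, (1 - H) l j := by
          rw [Finset.mul_sum]
          exact Finset.sum_congr rfl fun l _ => by rw [hX l]
      _ = β := by
          simp only [Matrix.sub_apply, Finset.sum_sub_distrib, hHcol j, sub_zero]
          rw [show (∑ l, (1 : Matrix (Fin M) (Fin M) ℝ) l j) = 1 from by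
            simp [Matrix.one_apply, Finset.sum_ite_eq']]
          ring
  rw [hXhat]
  simp only [Matrix.add_apply, mul_add, Finset.sum_add_distrib, h1, ← hY, h2, zero_add]
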